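/- Honest Bob condition: let P₀ > 0, 0 ≤ δ ≤ P₀/2, αᵦ > 0, and μₐ ∈ [0,1]. Define, for P₁ ∈ {P₀−δ, P₀+δ}, U_c(P₁) = μₐ·(P₁ − P₀ + αᵦ) + (1−μₐ)·(−αᵦ + P₁/2 − P₀) and U_s(P₁) = −αᵦ + P₁/2. Then U_c(P₁) > U_s(P₁) for both values of P₁ if and only if μₐ > 2P₀ / (4αᵦ + P₀ − δ). -/
import Mathlib


/-- Honest Bob condition: continuing beats stopping in both price states iff
`μa > 2P₀ / (4αb + P₀ - δ)`. -/
theorem honest_bob_condition (P₀ δ αb μa : ℝ)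
    (hP₀ : 0 < P₀) (hδ0 : 0 ≤ δ) (hδ2 : δ ≤ P₀ / 2) (hαb : 0 < αb)
    (hμ0 : 0 ≤ μa) (hμ1 : μa ≤ 1) (hden : 0 < 4 * αb + P₀ - δ) :
    (∀ P₁ : ℝ, (P₁ = P₀ - δ ∨ P₁ = P₀ + δ) →
      μa * (P₁ - P₀ + αb) + (1 - μa) * (-αb + P₁ / 2 - P₀) > -αb + P₁ / 2)
    ↔ μa > 2 * P₀ / (4 * αb + P₀ - δ) := by
  have key : (2 * P₀ / (4 * αb + P₀ - δ) < μa) ↔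
      2 * P₀ < μa * (4 * αb + P₀ - δ) := div_lt_iff₀ hden
  constructor
  · intro h
    have h1 := h (P₀ - δ) (Or.inl rfl)
    rw [gt_iff_lt, key]
    nlinarith [h1]
  · intro h
    rw [gt_iff_lt, key] at h
    intro P₁ hP₁
    rcases hP₁ with rfl | rfl
    · nlinarith
    · nlinarith [mul_nonneg hμ0 hδ0]
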